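/- Let u, v be two distinct top vertices (u drawn above v), B a finite bottom set, and Adj a function assigning to each b ∈ B a nonempty subset Adj(b) ⊆ {u,v}; let k be the number of b ∈ B with Adj(b) = {u,v}. Then for every red-edge selection r : B → {u,v} (with r(b) ∈ Adj(b) for all b ∈ B) there exists a linear order ≺ on B with cr(≺) = k·(k−1)/2 that satisfies the red-edge constraint for r; such an order is obtained by placing all b with Adj(b) = {u} first, then the common neighbors with r(b) = u, then the common neighbors with r(b) = v, then all b with Adj(b) = {v}. -/

import Mathlib

/-- Crossing count of a 2-layer drawing: the number of ordered pairs `(a, b)` of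
bottom vertices with `b ≺ a`, `u ∈ Adj a` and `v ∈ Adj b`. -/
noncomputable def crossNum2 {T B : Type} (u v : T) (Adj : B → Set T)
    (lt : B → B → Prop) : ℕ :=
  {p : B × B | lt p.2 p.1 ∧ u ∈ Adj p.1 ∧ v ∈ Adj p.2}.ncard

/-- The red-edge constraint: no two red edges cross. -/
def REC2 {T B : Type} (u v : T) (r : B → T) (lt : B → B → Prop) : Prop :=
  ∀ a b : B, a ≠ b →
    ¬ ((r a = u ∧ r b = v ∧ lt b a) ∨ (r a = v ∧ r b = u ∧ lt a b))

/-- For every red-edge selection `r` there is a linear order with exactly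
`k * (k-1) / 2` crossings satisfying the red-edge constraint for `r`; such an
order is obtained by placing the class `{b | Adj b = {u}}` first, then the common
neighbors with `r b = u`, then the common neighbors with `r b = v`, then the
class `{b | Adj b = {v}}`. -/
theorem stmt4 {T B : Type} [Fintype B] (u v : T) (huv : u ≠ v)
    (Adj : B → Set T) (hsub : ∀ b, Adj b ⊆ {u, v}) (hne : ∀ b, (Adj b).Nonempty)
    (k : ℕ) (hk : k = {b : B | Adj b = {u, v}}.ncard)
    (r : B → T) (hr : ∀ b, r b ∈ Adj b) :
    ∃ lt : B → B → Prop, IsStrictTotalOrder B lt ∧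
      (∀ a b : B,
        ((Adj a = {u} ∧ (Adj b = {u, v} ∨ Adj b = {v})) ∨
         (Adj a = {u, v} ∧ r a = u ∧ ((Adj b = {u, v} ∧ r b = v) ∨ Adj b = {v})) ∨
         (Adj a = {u, v} ∧ r a = v ∧ Adj b = {v})) → lt a b) ∧
      REC2 u v r lt ∧
      crossNum2 u v Adj lt = k * (k - 1) / 2 := by
  classical
  -- classification of Adj b
  have hclass : ∀ b : B, Adj b = {u} ∨ Adj b = {v} ∨ Adj b = {u, v} := by
    intro b
    by_cases hu : u ∈ Adj b <;> by_cases hv : v ∈ Adj b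
    · right; right
      refine Set.Subset.antisymm (hsub b) ?_
      intro x hx
      simp only [Set.mem_insert_iff, Set.mem_singleton_iff] at hx
      rcases hx with h | h
      · rw [h]; exact hu
      · rw [h]; exact hv
    · left
      refine Set.Subset.antisymm ?_ ?_
      · intro x hx
        rcases hsub b hx with h | h
        · exact h
        · simp only [Set.mem_singleton_iff] at h
          exact absurd (h ▸ hx) hv
      · intro x hx
        simp only [Set.mem_singleton_iff] at hx
        rw [hx]; exact hu
    · right; left
      refine Set.Subset.antisymm ?_ ?_
      · intro x hx
        rcases hsub b hx with h | h
        · exact absurd (h ▸ hx) hu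
        · exact h
      · intro x hx
        simp only [Set.mem_singleton_iff] at hx
        rw [hx]; exact hv
    · obtain ⟨x, hx⟩ := hne b
      rcases hsub b hx with h | h
      · exact absurd (h ▸ hx) hu
      · simp only [Set.mem_singleton_iff] at h
        exact absurd (h ▸ hx) hv
  have h1 : ({u} : Set T) ≠ {u, v} := by
    intro h
    have : v ∈ ({u} : Set T) := by rw [h]; simp
    exact huv (Set.mem_singleton_iff.mp this).symm
  have h2 : ({v} : Set T) ≠ {u, v} := by
    intro h
    have : u ∈ ({v} : Set T) := by rw [h]; simp
    exact huv (Set.mem_singleton_iff.mp this)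
  have h3 : ({u} : Set T) ≠ ({v} : Set T) := by
    intro h
    have : u ∈ ({v} : Set T) := by rw [← h]; simp
    exact huv (Set.mem_singleton_iff.mp this)
  have hru_or : ∀ b, r b = u ∨ r b = v := by
    intro b
    have := hsub b (hr b)
    simpa using this
  set f : B → ℕ := fun b =>
    if Adj b = {u} then 0
    else if Adj b = {u, v} then (if r b = u then 1 else 2)
    else 3 with hf
  have hf0 : ∀ b, Adj b = {u} → f b = 0 := by intro b h; simp [hf, h]
  have hf1 : ∀ b, Adj b = {u, v} → r b = u → f b = 1 := by
    intro b h h'; simp [hf, h, h', Ne.symm h1]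
  have hf2 : ∀ b, Adj b = {u, v} → r b = v → f b = 2 := by
    intro b h h'; simp [hf, h, h', Ne.symm h1, Ne.symm huv]
  have hf3 : ∀ b, Adj b = {v} → f b = 3 := by
    intro b h; simp [hf, h, Ne.symm h3, h2]
  have hcases : ∀ b : B,
      (Adj b = {u} ∧ f b = 0) ∨
      (Adj b = {u, v} ∧ r b = u ∧ f b = 1) ∨
      (Adj b = {u, v} ∧ r b = v ∧ f b = 2) ∨
      (Adj b = {v} ∧ f b = 3) := by
    intro b
    rcases hclass b with h | h | h
    · exact Or.inl ⟨h, hf0 b h⟩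
    · exact Or.inr (Or.inr (Or.inr ⟨h, hf3 b h⟩))
    · rcases hru_or b with h' | h'
      · exact Or.inr (Or.inl ⟨h, h', hf1 b h h'⟩)
      · exact Or.inr (Or.inr (Or.inl ⟨h, h', hf2 b h h'⟩))
  set e : B → ℕ := fun b => ((Fintype.equivFin B) b : ℕ) with hedef
  have he : ∀ a b : B, e a = e b → a = b := by
    intro a b h
    exact (Fintype.equivFin B).injective (Fin.val_injective h)
  set L : B → B → Prop := fun a b => f a < f b ∨ (f a = f b ∧ e a < e b) with hLdef
  have hL : ∀ a b, L a b ↔ (f a < f b ∨ (f a = f b ∧ e a < e b)) := fun a b => Iff.rfl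
  -- bounds from red-edge colors
  have hfu : ∀ x, r x = u → f x ≤ 1 := by
    intro x hx
    rcases hcases x with ⟨q1, q2⟩ | ⟨q1, q2, q3⟩ | ⟨q1, q2, q3⟩ | ⟨q1, q2⟩
    · omega
    · omega
    · exact absurd (hx.symm.trans q2) huv
    · exfalso
      have := hr x
      rw [q1, Set.mem_singleton_iff] at this
      exact huv (hx.symm.trans this)
  have hfv : ∀ x, r x = v → 2 ≤ f x := by
    intro x hx
    rcases hcases x with ⟨q1, q2⟩ | ⟨q1, q2, q3⟩ | ⟨q1, q2, q3⟩ | ⟨q1, q2⟩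
    · exfalso
      have := hr x
      rw [q1, Set.mem_singleton_iff] at this
      exact huv (this.symm.trans hx)
    · exact absurd (q2.symm.trans hx) huv
    · omega
    · omega
  refine ⟨L, ?_, ?_, ?_, ?_⟩
  · -- strict total order
    have htri : IsTrichotomous B L := by
      constructor
      intro a b
      suffices hs : L a b ∨ a = b ∨ L b a from fun h1 h2 => hs.elim (fun h => absurd h h1) (fun h => h.elim id (fun h => absurd h h2))
      rcases lt_trichotomy (f a) (f b) with h | h | h
      · exact Or.inl (Or.inl h)
      · rcases lt_trichotomy (e a) (e b) with h' | h' | h'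
        · exact Or.inl (Or.inr ⟨h, h'⟩)
        · exact Or.inr (Or.inl (he a b h'))
        · exact Or.inr (Or.inr (Or.inr ⟨h.symm, h'⟩))
      · exact Or.inr (Or.inr (Or.inl h))
    have hirr : IsIrrefl B L := by
      constructor
      intro a h
      rw [hL] at h
      omega
    have htr : IsTrans B L := by
      constructor
      intro a b c hab hbc
      rw [hL] at hab hbc ⊢
      omega
    exact { }
  · -- the forced order
    intro a b h
    rw [hL]
    rcases h with ⟨ha, hb⟩ | ⟨ha, hra, hb⟩ | ⟨ha, hra, hb⟩
    · have hfa := hf0 a ha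
      have hfb : 1 ≤ f b := by
        rcases hb with hb | hb
        · rcases hru_or b with h' | h'
          · have := hf1 b hb h'; omega
          · have := hf2 b hb h'; omega
        · have := hf3 b hb; omega
      omega
    · have hfa := hf1 a ha hra
      have hfb : 2 ≤ f b := by
        rcases hb with ⟨hb, hrb⟩ | hb
        · have := hf2 b hb hrb; omega
        · have := hf3 b hb; omega
      omega
    · have hfa := hf2 a ha hra
      have hfb := hf3 b hb
      omega
  · -- REC
    intro a b hab h
    rcases h with ⟨hra, hrb, hlt⟩ | ⟨hra, hrb, hlt⟩
    · have q1 := hfu a hra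
      have q2 := hfv b hrb
      rw [hL] at hlt
      omega
    · have q1 := hfv a hra
      have q2 := hfu b hrb
      rw [hL] at hlt
      omega
  · -- crossing number
    set Cf : Finset B := Finset.univ.filter (fun b : B => Adj b = {u, v}) with hCf
    have hkcard : k = Cf.card := by
      rw [hk]
      have : {b : B | Adj b = {u, v}} = ↑Cf := by
        ext b; simp [hCf]
      rw [this, Set.ncard_coe_finset]
    set S : Finset (B × B) := Cf.offDiag.filter (fun p : B × B => L p.2 p.1) with hS
    have key : {p : B × B | L p.2 p.1 ∧ u ∈ Adj p.1 ∧ v ∈ Adj p.2} = ↑S := by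
      ext ⟨a, b⟩
      simp only [Set.mem_setOf_eq, Finset.coe_filter, Finset.mem_offDiag, Finset.mem_filter,
        Finset.mem_univ, hCf, true_and, hS]
      constructor
      · rintro ⟨hlt, hua, hvb⟩
        have hfa : Adj a = {u, v} := by
          rcases hcases a with ⟨q1, q2⟩ | ⟨q1, q2, q3⟩ | ⟨q1, q2, q3⟩ | ⟨q1, q2⟩
          · -- Adj a = {u}, so f a = 0, hence f b = 0, so Adj b = {u}, contra v ∈ Adj b
            exfalso
            have hfb0 : f b = 0 := by rw [hL] at hlt; omega
            have : Adj b = {u} := by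
              rcases hcases b with ⟨w1, w2⟩ | ⟨w1, w2, w3⟩ | ⟨w1, w2, w3⟩ | ⟨w1, w2⟩ <;>
                first | exact w1 | omega
            rw [this, Set.mem_singleton_iff] at hvb
            exact huv hvb.symm
          · exact q1
          · exact q1
          · rw [q1, Set.mem_singleton_iff] at hua
            exact absurd hua huv
        have hfb : Adj b = {u, v} := by
          rcases hcases b with ⟨q1, q2⟩ | ⟨q1, q2, q3⟩ | ⟨q1, q2, q3⟩ | ⟨q1, q2⟩
          · rw [q1, Set.mem_singleton_iff] at hvb
            exact absurd hvb.symm huv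
          · exact q1
          · exact q1
          · exfalso
            have hfa3 : 3 ≤ f a := by rw [hL] at hlt; omega
            have : Adj a = {v} := by
              rcases hcases a with ⟨w1, w2⟩ | ⟨w1, w2, w3⟩ | ⟨w1, w2, w3⟩ | ⟨w1, w2⟩ <;>
                first | omega | exact w1
            rw [this, Set.mem_singleton_iff] at hua
            exact huv hua
        have hne' : a ≠ b := by
          intro h
          subst h
          rw [hL] at hlt
          omega
        exact ⟨⟨hfa, hfb, hne'⟩, hlt⟩
      · rintro ⟨⟨hfa, hfb, hne'⟩, hlt⟩
        refine ⟨hlt, ?_, ?_⟩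
        · rw [hfa]; simp
        · rw [hfb]; simp
    have hcross : crossNum2 u v Adj L = S.card := by
      show {p : B × B | L p.2 p.1 ∧ u ∈ Adj p.1 ∧ v ∈ Adj p.2}.ncard = S.card
      rw [key, Set.ncard_coe_finset]
    rw [hcross]
    -- count
    have hswap : (Cf.offDiag.filter fun p : B × B => ¬ L p.2 p.1).card = S.card := by
      refine Finset.card_bij (fun p _ => (p.2, p.1)) ?_ ?_ ?_
      · intro p hp
        simp only [Finset.mem_filter, Finset.mem_offDiag, hS] at hp ⊢
        obtain ⟨⟨m1, m2, m3⟩, m4⟩ := hp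
        refine ⟨⟨m2, m1, Ne.symm m3⟩, ?_⟩
        have hee : e p.1 ≠ e p.2 := fun h => m3 (he _ _ h)
        rw [hL] at m4 ⊢
        omega
      · intro p hp q hq hpq
        have e1 := congrArg Prod.fst hpq
        have e2 := congrArg Prod.snd hpq
        simp only at e1 e2
        exact Prod.ext e2 e1
      · intro q hq
        simp only [Finset.mem_filter, Finset.mem_offDiag, hS] at hq
        obtain ⟨⟨m1, m2, m3⟩, m4⟩ := hq
        refine ⟨(q.2, q.1), ?_, rfl⟩
        simp only [Finset.mem_filter, Finset.mem_offDiag]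
        refine ⟨⟨m2, m1, Ne.symm m3⟩, ?_⟩
        rw [hL] at m4 ⊢
        omega
    have hsum : S.card + (Cf.offDiag.filter fun p : B × B => ¬ L p.2 p.1).card
        = Cf.offDiag.card := by
      rw [hS]
      exact Finset.card_filter_add_card_filter_not _
    have hoff : Cf.offDiag.card = k * k - k := by
      rw [Finset.offDiag_card, ← hkcard]
    have hmul : k * (k - 1) = k * k - k := by rw [Nat.mul_sub, Nat.mul_one]
    omega
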